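/- Let C be a cover and M be a matching of a weighted bipartite graph G such that every node u with C(u) > 0 is matched by some edge of M, and C(u) + C(v) = w(u,v) for every edge uv ∈ M. Then C is a minimum weight cover and M is a maximum weight matching of G. -/
import Mathlib


open Finset

variable {V : Type*} [Fintype V] [DecidableEq V]

/-- `C` is a (weighted vertex) cover of the bipartite graph on parts `X`, `Y`
with edge weights `w` (where `w x y = 0` means no edge). -/
def IsCover (X Y : Finset V) (w : V → V → ℕ) (C : V → ℕ) : Prop :=
  ∀ x ∈ X, ∀ y ∈ Y, w x y ≤ C x + C y

/-- The weight of a cover: the sum of its values over all nodes. -/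
def coverWt (X Y : Finset V) (C : V → ℕ) : ℕ := ∑ u ∈ X ∪ Y, C u

/-- `M` is a matching of the weighted bipartite graph: a set of pairwise
node-disjoint edges, each going from `X` to `Y` with positive weight. -/
def IsBMatching (X Y : Finset V) (w : V → V → ℕ) (M : Finset (V × V)) : Prop :=
  (∀ e ∈ M, e.1 ∈ X ∧ e.2 ∈ Y ∧ 0 < w e.1 e.2) ∧
  (∀ e ∈ M, ∀ f ∈ M, e ≠ f → e.1 ≠ f.1 ∧ e.2 ≠ f.2)

/-- The total weight of a matching. -/
def mWt (w : V → V → ℕ) (M : Finset (V × V)) : ℕ := ∑ e ∈ M, w e.1 e.2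

/-- Fact 1 (3 ⇒ 1): complementary slackness conditions imply optimality of
both the cover and the matching. -/
theorem slackness_implies_optimal
    (X Y : Finset V) (hXY : Disjoint X Y) (w : V → V → ℕ)
    (C : V → ℕ) (M : Finset (V × V))
    (hC : IsCover X Y w C) (hM : IsBMatching X Y w M)
    (hmatched : ∀ u ∈ X ∪ Y, 0 < C u → ∃ e ∈ M, e.1 = u ∨ e.2 = u)
    (htight : ∀ e ∈ M, C e.1 + C e.2 = w e.1 e.2) :
    (∀ C' : V → ℕ, IsCover X Y w C' → coverWt X Y C ≤ coverWt X Y C') ∧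
    (∀ M' : Finset (V × V), IsBMatching X Y w M' → mWt w M' ≤ mWt w M) := by
  -- weak duality: any matching weight ≤ any cover weight
  have key : ∀ (C' : V → ℕ) (M' : Finset (V × V)), IsCover X Y w C' →
      IsBMatching X Y w M' → mWt w M' ≤ coverWt X Y C' := by
    intro C' M' hC' hM'
    have hinj1 : ∀ e ∈ M', ∀ f ∈ M', e.1 = f.1 → e = f := by
      intro e he f hf h
      by_contra hne
      exact (hM'.2 e he f hf hne).1 h
    have hinj2 : ∀ e ∈ M', ∀ f ∈ M', e.2 = f.2 → e = f := by
      intro e he f hf h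
      by_contra hne
      exact (hM'.2 e he f hf hne).2 h
    have hsub1 : M'.image Prod.fst ⊆ X := by
      intro x hx
      obtain ⟨e, he, rfl⟩ := Finset.mem_image.1 hx
      exact (hM'.1 e he).1
    have hsub2 : M'.image Prod.snd ⊆ Y := by
      intro y hy
      obtain ⟨e, he, rfl⟩ := Finset.mem_image.1 hy
      exact (hM'.1 e he).2.1
    calc mWt w M' = ∑ e ∈ M', w e.1 e.2 := rfl
      _ ≤ ∑ e ∈ M', (C' e.1 + C' e.2) :=
          Finset.sum_le_sum fun e he =>
            hC' e.1 (hM'.1 e he).1 e.2 (hM'.1 e he).2.1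
      _ = ∑ e ∈ M', C' e.1 + ∑ e ∈ M', C' e.2 := Finset.sum_add_distrib
      _ = ∑ x ∈ M'.image Prod.fst, C' x + ∑ y ∈ M'.image Prod.snd, C' y := by
          rw [Finset.sum_image hinj1, Finset.sum_image hinj2]
      _ ≤ ∑ x ∈ X, C' x + ∑ y ∈ Y, C' y :=
          add_le_add (Finset.sum_le_sum_of_subset hsub1)
            (Finset.sum_le_sum_of_subset hsub2)
      _ = coverWt X Y C' := (Finset.sum_union hXY).symm
  -- equality for the given pair
  have hinj1 : ∀ e ∈ M, ∀ f ∈ M, e.1 = f.1 → e = f := by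
    intro e he f hf h
    by_contra hne
    exact (hM.2 e he f hf hne).1 h
  have hinj2 : ∀ e ∈ M, ∀ f ∈ M, e.2 = f.2 → e = f := by
    intro e he f hf h
    by_contra hne
    exact (hM.2 e he f hf hne).2 h
  have hsub1 : M.image Prod.fst ⊆ X := by
    intro x hx
    obtain ⟨e, he, rfl⟩ := Finset.mem_image.1 hx
    exact (hM.1 e he).1
  have hsub2 : M.image Prod.snd ⊆ Y := by
    intro y hy
    obtain ⟨e, he, rfl⟩ := Finset.mem_image.1 hy
    exact (hM.1 e he).2.1
  have h1 : ∑ x ∈ X, C x = ∑ e ∈ M, C e.1 := by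
    rw [← Finset.sum_image hinj1]
    refine (Finset.sum_subset hsub1 ?_).symm
    intro x hx hnx
    by_contra h0
    obtain ⟨e, he, h⟩ := hmatched x (Finset.mem_union_left _ hx) (Nat.pos_of_ne_zero h0)
    rcases h with h | h
    · exact hnx (Finset.mem_image.2 ⟨e, he, h⟩)
    · exact (Finset.disjoint_left.1 hXY hx) (h ▸ (hM.1 e he).2.1)
  have h2 : ∑ y ∈ Y, C y = ∑ e ∈ M, C e.2 := by
    rw [← Finset.sum_image hinj2]
    refine (Finset.sum_subset hsub2 ?_).symm
    intro y hy hny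
    by_contra h0
    obtain ⟨e, he, h⟩ := hmatched y (Finset.mem_union_right _ hy) (Nat.pos_of_ne_zero h0)
    rcases h with h | h
    · exact (Finset.disjoint_left.1 hXY (h ▸ (hM.1 e he).1)) hy
    · exact hny (Finset.mem_image.2 ⟨e, he, h⟩)
  have heq : coverWt X Y C = mWt w M := by
    calc coverWt X Y C = ∑ x ∈ X, C x + ∑ y ∈ Y, C y := Finset.sum_union hXY
      _ = ∑ e ∈ M, C e.1 + ∑ e ∈ M, C e.2 := by rw [h1, h2]
      _ = ∑ e ∈ M, (C e.1 + C e.2) := Finset.sum_add_distrib.symm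
      _ = ∑ e ∈ M, w e.1 e.2 := Finset.sum_congr rfl fun e he => htight e he
      _ = mWt w M := rfl
  constructor
  · intro C' hC'
    calc coverWt X Y C = mWt w M := heq
      _ ≤ coverWt X Y C' := key C' M hC' hM
  · intro M' hM'
    calc mWt w M' ≤ coverWt X Y C := key C M' hC hM'
      _ = mWt w M := heq
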